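/- Let D₁ and D₂ be closed disks in ℝ² with centers c₁ ≠ c₂ and radii r₁ ≥ r₂ > 0, whose boundary circles intersect at a point u with angle ∠c₁ u c₂ at least 2π/3. Let c = c₁ + √3·r₁·(c₂ − c₁)/‖c₂ − c₁‖ (so that c₁, c₂, c are collinear, c lies on the same side of c₁ as c₂, and ‖c₁ − c‖ = √3·r₁), and let E be the closed disk of radius r₁ centered at c. If c₂ lies on the segment between c₁ and c, then D₂ ⊆ E. -/
import Mathlib


set_option maxHeartbeats 1000000 in
/-- **Lemma (subset).**
Let `D₁`, `D₂` be intersecting closed disks with centers `c₁ ≠ c₂` and radii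
`r₁ ≥ r₂ > 0`, whose boundary circles meet at a point `u` with lens angle
`∠ c₁ u c₂ ≥ 2π/3`.  Let `c = c₁ + √3·r₁·(c₂ − c₁)/‖c₂ − c₁‖` and let `E` be the
closed disk of radius `r₁` centered at `c`.  If `c₂` lies on the segment between
`c₁` and `c`, then `D₂ ⊆ E`. -/
theorem disk_subset_of_lens_angle_ge
    (c₁ c₂ : EuclideanSpace ℝ (Fin 2)) (r₁ r₂ : ℝ)
    (hc : c₁ ≠ c₂) (hr₂ : 0 < r₂) (hr : r₂ ≤ r₁)
    (u : EuclideanSpace ℝ (Fin 2))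
    (hu₁ : dist u c₁ = r₁) (hu₂ : dist u c₂ = r₂)
    (hangle : 2 * Real.pi / 3 ≤ EuclideanGeometry.angle c₁ u c₂)
    (c : EuclideanSpace ℝ (Fin 2))
    (hcdef : c = c₁ + (Real.sqrt 3 * r₁ / ‖c₂ - c₁‖) • (c₂ - c₁))
    (hbetween : c₂ ∈ segment ℝ c₁ c) :
    Metric.closedBall c₂ r₂ ⊆ Metric.closedBall c r₁ := by
  have hr₁ : 0 < r₁ := lt_of_lt_of_le hr₂ hr
  set d : ℝ := dist c₁ c₂ with hd
  have hdpos : 0 < d := dist_pos.mpr hc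
  have hdn : d = ‖c₂ - c₁‖ := by rw [hd, dist_eq_norm, norm_sub_rev]
  -- distance c₁ c = √3 r₁
  have hs3 : (0:ℝ) < Real.sqrt 3 := Real.sqrt_pos.mpr (by norm_num)
  have hcc : dist c₁ c = Real.sqrt 3 * r₁ := by
    rw [hcdef, dist_eq_norm]
    have : c₁ - (c₁ + (Real.sqrt 3 * r₁ / ‖c₂ - c₁‖) • (c₂ - c₁))
        = -((Real.sqrt 3 * r₁ / ‖c₂ - c₁‖) • (c₂ - c₁)) := by abel
    rw [this, norm_neg, norm_smul, Real.norm_eq_abs, abs_of_nonneg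
      (by positivity), div_mul_eq_mul_div, mul_div_assoc,
      div_self (by rw [← hdn]; exact ne_of_gt hdpos), mul_one]
  have hseg : dist c₁ c₂ + dist c₂ c = dist c₁ c :=
    (dist_add_dist_eq_iff.mpr (mem_segment_iff_wbtw.mp hbetween)).symm ▸ rfl
  -- cos bound
  have hcos : Real.cos (EuclideanGeometry.angle c₁ u c₂) ≤ -(1/2) := by
    have := Real.cos_le_cos_of_nonneg_of_le_pi (by positivity)
      (EuclideanGeometry.angle_le_pi c₁ u c₂) hangle
    calc Real.cos (EuclideanGeometry.angle c₁ u c₂) ≤ Real.cos (2*Real.pi/3) := this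
      _ = -(1/2) := by
          have : 2*Real.pi/3 = Real.pi - Real.pi/3 := by ring
          rw [this, Real.cos_pi_sub, Real.cos_pi_div_three]
  have hlaw := EuclideanGeometry.law_cos c₁ u c₂
  rw [dist_comm c₁ u, dist_comm c₂ u, hu₁, hu₂] at hlaw
  have hdsq : r₁^2 + r₂^2 + r₁*r₂ ≤ d^2 := by
    have hcos' : 2 * r₁ * r₂ * Real.cos (EuclideanGeometry.angle c₁ u c₂) ≤
        2 * r₁ * r₂ * (-(1/2)) := by
      apply mul_le_mul_of_nonneg_left hcos (by positivity)
    nlinarith [hlaw]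
  have hdge : (Real.sqrt 3 - 1) * r₁ + r₂ ≤ d := by
    have hsq : ((Real.sqrt 3 - 1) * r₁ + r₂)^2 ≤ d^2 := by
      have h3 : Real.sqrt 3 ^ 2 = 3 := Real.sq_sqrt (by norm_num)
      have hs3' : Real.sqrt 3 ≤ 2 := by nlinarith [hs3]
      have hs3'' : (3:ℝ)/2 ≤ Real.sqrt 3 := by nlinarith [hs3]
      have key : (2*Real.sqrt 3 - 3) * (r₁ * (r₁ - r₂)) ≥ 0 := by
        apply mul_nonneg (by nlinarith) (by nlinarith)
      have expand : ((Real.sqrt 3 - 1) * r₁ + r₂)^2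
          = r₁^2 + r₂^2 + r₁*r₂ - (2*Real.sqrt 3 - 3) * (r₁ * (r₁ - r₂)) := by
        linear_combination r₁^2 * h3
      rw [expand]; linarith [hdsq, key]
    have h1le : (1:ℝ) ≤ Real.sqrt 3 := by
      rw [show (1:ℝ) = Real.sqrt 1 by simp]
      exact Real.sqrt_le_sqrt (by norm_num)
    have hnn : 0 ≤ (Real.sqrt 3 - 1) * r₁ + r₂ :=
      add_nonneg (mul_nonneg (by linarith) hr₁.le) hr₂.le
    have := Real.sqrt_le_sqrt hsq
    rwa [Real.sqrt_sq hnn, Real.sqrt_sq hdpos.le] at this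
  apply Metric.closedBall_subset_closedBall'
  have h2 : dist c₂ c = Real.sqrt 3 * r₁ - d := by
    have := hseg; rw [hcc] at this; linarith
  rw [h2]; linarith
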